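/- Suppose f : ℕ → ℕ is strictly monotone increasing and f(a_i - 2) = 2^{i-3} for all i ≥ 4, where (a_i) is the Fibonacci sequence. Then for all n in the domain considered (n a length with a_k ≤ n < a_{k+1}, k ≥ 4), (1/8) n^c < f(n) < 2 n^c, where c = log(2)/log(α) and α = (1+√5)/2. -/

import Mathlib

open goldenRatio in
lemma gold_pow_le_fib (m : ℕ) : (φ : ℝ) ^ m ≤ Nat.fib (m + 2) := by
  induction m using Nat.strong_induction_on with
  | _ m ih =>
    match m with
    | 0 => simp
    | 1 => simpa [show Nat.fib 3 = 2 by decide] using Real.goldenRatio_lt_two.le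
    | (m + 2) =>
      have h1 := ih m (by omega)
      have h2 := ih (m + 1) (by omega)
      have h3 : (φ : ℝ) ^ (m + 2) = φ ^ (m + 1) + φ ^ m := by
        calc (φ : ℝ) ^ (m + 2) = φ ^ m * φ ^ 2 := by ring
        _ = φ ^ m * (φ + 1) := by rw [Real.goldenRatio_sq]
        _ = φ ^ (m + 1) + φ ^ m := by ring
      rw [h3, Nat.fib_add_two]
      push_cast
      linarith

open goldenRatio in
lemma fib_le_gold_pow (m : ℕ) : (Nat.fib (m + 1) : ℝ) ≤ (φ : ℝ) ^ m := by
  induction m using Nat.strong_induction_on with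
  | _ m ih =>
    match m with
    | 0 => simp
    | 1 => simpa using Real.one_lt_goldenRatio.le
    | (m + 2) =>
      have h1 := ih m (by omega)
      have h2 := ih (m + 1) (by omega)
      have h3 : (φ : ℝ) ^ (m + 2) = φ ^ (m + 1) + φ ^ m := by
        calc (φ : ℝ) ^ (m + 2) = φ ^ m * φ ^ 2 := by ring
        _ = φ ^ m * (φ + 1) := by rw [Real.goldenRatio_sq]
        _ = φ ^ (m + 1) + φ ^ m := by ring
      rw [Nat.fib_add_two, h3]
      push_cast
      linarith

/-- Suppose `f : ℕ → ℕ` is strictly monotone increasing with `f (a_i - 2) = 2^{i-3}`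
for all `i ≥ 4`, where `a` is the Fibonacci sequence. Then for every `n` lying in a range
`a_k ≤ n < a_{k+1}` with `k ≥ 4`, one has `(1/8) n^c < f n < 2 n^c`, where
`c = log 2 / log α` and `α = (1+√5)/2`. -/
theorem growth_bounds (f : ℕ → ℕ) (hf : StrictMono f)
    (hfib : ∀ i, 4 ≤ i → f (Nat.fib i - 2) = 2 ^ (i - 3))
    (n k : ℕ) (hk : 4 ≤ k) (h1 : Nat.fib k ≤ n) (h2 : n < Nat.fib (k + 1)) :
    (1 / 8 : ℝ) * (n : ℝ) ^ (Real.log 2 / Real.log ((1 + Real.sqrt 5) / 2)) < (f n : ℝ) ∧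
      (f n : ℝ) < 2 * (n : ℝ) ^ (Real.log 2 / Real.log ((1 + Real.sqrt 5) / 2)) := by
  obtain ⟨m, rfl⟩ : ∃ m, k = m + 4 := ⟨k - 4, by omega⟩
  set φ : ℝ := (1 + Real.sqrt 5) / 2 with hφdef
  have hφ : φ = Real.goldenRatio := rfl
  have hgold1 : (1 : ℝ) < φ := by rw [hφ]; exact Real.one_lt_goldenRatio
  have hgoldpos : (0 : ℝ) < φ := lt_trans one_pos hgold1
  set c : ℝ := Real.log 2 / Real.log φ with hc
  have hlogφ : 0 < Real.log φ := Real.log_pos hgold1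
  have hcpos : 0 < c := div_pos (Real.log_pos one_lt_two) hlogφ
  have hφc : φ ^ c = 2 := by
    rw [hc, Real.rpow_def_of_pos hgoldpos, mul_comm, div_mul_cancel₀ _ (ne_of_gt hlogφ),
      Real.exp_log two_pos]
  have hφpowc : ∀ j : ℕ, ((φ : ℝ) ^ j) ^ c = 2 ^ j := by
    intro j
    rw [← Real.rpow_natCast φ j, ← Real.rpow_mul hgoldpos.le, mul_comm,
      Real.rpow_mul hgoldpos.le, hφc, Real.rpow_natCast]
  -- basic numeric facts
  have hfib4 : Nat.fib 4 = 3 := by decide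
  have hnpos : 3 ≤ n := by
    have : Nat.fib 4 ≤ Nat.fib (m + 4) := Nat.fib_mono (by omega)
    omega
  have hnR : (0 : ℝ) < n := by positivity
  -- lower bound on f n
  have hflow : 2 ^ (m + 1) ≤ f n := by
    have heq := hfib (m + 4) (by omega)
    rw [show m + 4 - 3 = m + 1 from by omega] at heq
    have hle : Nat.fib (m + 4) - 2 ≤ n := by omega
    calc 2 ^ (m + 1) = f (Nat.fib (m + 4) - 2) := by rw [heq]
    _ ≤ f n := hf.monotone hle
  -- upper bound on f n
  have hfhigh : f n < 2 ^ (m + 3) := by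
    have heq := hfib (m + 6) (by omega)
    rw [show m + 6 - 3 = m + 3 from by omega] at heq
    have hlt : n < Nat.fib (m + 6) - 2 := by
      have hub : Nat.fib (m + 6) = Nat.fib (m + 4) + Nat.fib (m + 5) := Nat.fib_add_two
      have h3 : 3 ≤ Nat.fib (m + 4) := by
        have := Nat.fib_mono (show 4 ≤ m + 4 by omega); omega
      have h2' : n < Nat.fib (m + 5) := h2
      omega
    calc f n < f (Nat.fib (m + 6) - 2) := hf hlt
    _ = 2 ^ (m + 3) := heq
  constructor
  · -- (1/8) n^c < f n : enough that n^c < 2^(m+4)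
    have hnlt : (n : ℝ) < φ ^ (m + 4) := by
      have h2' : n < Nat.fib (m + 5) := h2
      calc (n : ℝ) < Nat.fib (m + 5) := by exact_mod_cast h2'
      _ ≤ φ ^ (m + 4) := fib_le_gold_pow (m + 4)
    have : (n : ℝ) ^ c < 2 ^ (m + 4) := by
      calc (n : ℝ) ^ c < (φ ^ (m + 4)) ^ c :=
        Real.rpow_lt_rpow hnR.le hnlt hcpos
      _ = 2 ^ (m + 4) := hφpowc (m + 4)
    have hfl : (2 : ℝ) ^ (m + 1) ≤ f n := by exact_mod_cast hflow
    calc (1 / 8 : ℝ) * (n : ℝ) ^ c < (1 / 8) * 2 ^ (m + 4) := by linarith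
    _ = 2 ^ (m + 1) := by ring
    _ ≤ f n := hfl
  · -- f n < 2 n^c : enough that 2^(m+2) ≤ n^c
    have hnge : (φ : ℝ) ^ (m + 2) ≤ n := by
      calc (φ : ℝ) ^ (m + 2) ≤ Nat.fib (m + 4) := gold_pow_le_fib (m + 2)
      _ ≤ n := by exact_mod_cast h1
    have h2c : (2 : ℝ) ^ (m + 2) ≤ (n : ℝ) ^ c := by
      calc (2 : ℝ) ^ (m + 2) = (φ ^ (m + 2)) ^ c := (hφpowc (m + 2)).symm
      _ ≤ (n : ℝ) ^ c := Real.rpow_le_rpow (by positivity) hnge hcpos.le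
    have hfh : (f n : ℝ) < 2 ^ (m + 3) := by exact_mod_cast hfhigh
    calc (f n : ℝ) < 2 ^ (m + 3) := hfh
    _ = 2 * 2 ^ (m + 2) := by ring
    _ ≤ 2 * (n : ℝ) ^ c := by linarith
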